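/- Let d ≥ 1 and let (Ω,𝒜) be a measurable space. Let ψ : Ω×(0,∞)×ℝᵈ → ℂ, U₀ : Ω×ℝᵈ → ℂ and F : Ω×(0,∞)×ℝᵈ → ℂ be measurable with respect to the product σ-algebras 𝒜⊗B((0,∞))⊗B(ℝᵈ) and 𝒜⊗B(ℝᵈ), respectively. Define H : Ω×[0,∞)×ℝᵈ → ℂ by H(ω,t,ξ) := exp(∫₀^t ψ(ω,r,ξ) dr)·U₀(ω,ξ) + ∫₀^t exp(∫_s^t ψ(ω,r,ξ) dr)·F(ω,s,ξ) ds, where the integral of a non-integrable function is interpreted as 0. Then H is measurable with respect to 𝒜⊗B([0,∞))⊗B(ℝᵈ). -/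
import Mathlib


open MeasureTheory Set
open scoped ENNReal

/-- Auxiliary: a parametrized set integral over `Ioc (a x) (b x)` of a jointly measurable
integrand is measurable in the parameter. -/
lemma aux_meas_Ioc_integral {α : Type*} [MeasurableSpace α]
    {a b : α → ℝ} (ha : Measurable a) (hb : Measurable b)
    {f : α → ℝ → ℂ} (hf : Measurable (fun q : α × ℝ => f q.1 q.2)) :
    Measurable fun x => ∫ r in Ioc (a x) (b x), f x r := by
  have h : ∀ x, (∫ r in Ioc (a x) (b x), f x r)
      = ∫ r, (Ioc (a x) (b x)).indicator (f x) r := fun x =>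
    (integral_indicator measurableSet_Ioc).symm
  simp_rw [h]
  have hm : Measurable fun q : α × ℝ => (Ioc (a q.1) (b q.1)).indicator (f q.1) q.2 := by
    simp_rw [Set.indicator_apply, Set.mem_Ioc]
    refine Measurable.ite ?_ hf measurable_const
    exact MeasurableSet.inter
      (measurableSet_lt (ha.comp measurable_fst) measurable_snd)
      (measurableSet_le measurable_snd (hb.comp measurable_fst))
  exact hm.stronglyMeasurable.integral_prod_right'.measurable

/-- **Joint measurability of the random Duhamel expression** (the measurability assertion of the
paper's lemma on the deterministic part of the solution): if the (possibly random) symbol `ψ`,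
the initial data `U₀` and the inhomogeneity `F` are jointly measurable, then
`H(ω,t,ξ) := exp(∫₀^t ψ(ω,r,ξ) dr)·U₀(ω,ξ) + ∫₀^t exp(∫ₛ^t ψ(ω,r,ξ) dr)·F(ω,s,ξ) ds`
is jointly measurable in `(ω,t,ξ)` (Bochner integrals, interpreted as `0` when the integrand is
not integrable). -/
theorem duhamel_jointly_measurable
    (d : ℕ) (hd : 1 ≤ d)
    {Ω : Type*} [MeasurableSpace Ω]
    (ψ : Ω → ℝ → EuclideanSpace ℝ (Fin d) → ℂ)
    (U₀ : Ω → EuclideanSpace ℝ (Fin d) → ℂ)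
    (F : Ω → ℝ → EuclideanSpace ℝ (Fin d) → ℂ)
    (hψ : Measurable fun p : Ω × ℝ × EuclideanSpace ℝ (Fin d) => ψ p.1 p.2.1 p.2.2)
    (hU₀ : Measurable fun p : Ω × EuclideanSpace ℝ (Fin d) => U₀ p.1 p.2)
    (hF : Measurable fun p : Ω × ℝ × EuclideanSpace ℝ (Fin d) => F p.1 p.2.1 p.2.2) :
    Measurable fun p : Ω × ℝ × EuclideanSpace ℝ (Fin d) =>
      Complex.exp (∫ r in Ioc (0 : ℝ) p.2.1, ψ p.1 r p.2.2) * U₀ p.1 p.2.2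
        + ∫ s in Ioc (0 : ℝ) p.2.1,
            Complex.exp (∫ r in Ioc s p.2.1, ψ p.1 r p.2.2) * F p.1 s p.2.2 := by
  set P := Ω × ℝ × EuclideanSpace ℝ (Fin d)
  -- joint measurability of (p, s) ↦ ψ p.1 s p.2.2
  have hψ' : Measurable fun q : P × ℝ => ψ q.1.1 q.2 q.1.2.2 := by
    exact hψ.comp (measurable_fst.fst.prodMk
      (measurable_snd.prodMk measurable_fst.snd.snd))
  -- first inner integral
  have h1 : Measurable fun p : P => ∫ r in Ioc (0 : ℝ) p.2.1, ψ p.1 r p.2.2 :=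
    aux_meas_Ioc_integral measurable_const measurable_snd.fst hψ'
  -- inner integral with varying lower endpoint, jointly in (p, s)
  have h2 : Measurable fun q : P × ℝ => ∫ r in Ioc q.2 q.1.2.1, ψ q.1.1 r q.1.2.2 := by
    refine aux_meas_Ioc_integral measurable_snd measurable_fst.snd.fst ?_
    exact hψ.comp (measurable_fst.fst.fst.prodMk
      (measurable_snd.prodMk measurable_fst.fst.snd.snd))
  -- integrand of the Duhamel integral, jointly in (p, s)
  have h3 : Measurable fun q : P × ℝ =>
      Complex.exp (∫ r in Ioc q.2 q.1.2.1, ψ q.1.1 r q.1.2.2) * F q.1.1 q.2 q.1.2.2 := by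
    refine (Complex.measurable_exp.comp h2).mul ?_
    exact hF.comp (measurable_fst.fst.prodMk
      (measurable_snd.prodMk measurable_fst.snd.snd))
  have h4 : Measurable fun p : P =>
      ∫ s in Ioc (0 : ℝ) p.2.1,
        Complex.exp (∫ r in Ioc s p.2.1, ψ p.1 r p.2.2) * F p.1 s p.2.2 :=
    aux_meas_Ioc_integral measurable_const measurable_snd.fst h3
  exact ((Complex.measurable_exp.comp h1).mul
    (hU₀.comp (measurable_fst.prodMk measurable_snd.snd))).add h4
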